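/- Suppose Ŷ_{X,Z} = E[Y' | X, Z] = f(X) + g(X)·Z for measurable f, g, and suppose that almost surely Cov(Y, Z | X) and Cov(Y', Z | X) have opposite signs (i.e., their product is ≤ 0). Then Cov(Ŷ_{X,Z}, Y | X) ≤ 0 almost surely, and consequently E[(Ŷ_X − Y)²] ≤ E[(Ŷ_{X,Z} − Y)²], where Ŷ_X = E[Y' | X]. -/

import Mathlib

open MeasureTheory ProbabilityTheory

lemma integrable_mul₂ {α : Type*} {m0 : MeasurableSpace α} {μ : Measure α} {f g : α → ℝ}
    (hf : MemLp f 2 μ) (hg : MemLp g 2 μ) : Integrable (fun ω => f ω * g ω) μ := by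
  have h : MemLp (f • g) 1 μ := hg.smul hf
  exact memLp_one_iff_integrable.mp h

lemma cs_of_forall_rat {a b c : ℝ} (h : ∀ q : ℚ, 0 ≤ a + 2*(q:ℝ)*b + (q:ℝ)^2*c) :
    b^2 ≤ a*c ∧ 0 ≤ c := by
  have hR : ∀ t : ℝ, 0 ≤ a + 2*t*b + t^2*c := by
    have hcl : IsClosed {t : ℝ | 0 ≤ a + 2*t*b + t^2*c} :=
      isClosed_le continuous_const (by continuity)
    have hsub : Set.range ((↑) : ℚ → ℝ) ⊆ {t : ℝ | 0 ≤ a + 2*t*b + t^2*c} := by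
      rintro _ ⟨q, rfl⟩; exact h q
    intro t
    have : (Set.univ : Set ℝ) ⊆ {t : ℝ | 0 ≤ a + 2*t*b + t^2*c} := by
      calc (Set.univ : Set ℝ) = closure (Set.range ((↑) : ℚ → ℝ)) :=
            (Rat.denseRange_cast (𝕜 := ℝ)).closure_range.symm
        _ ⊆ closure {t : ℝ | 0 ≤ a + 2*t*b + t^2*c} := closure_mono hsub
        _ = _ := hcl.closure_eq
    exact this (Set.mem_univ t)
  have hc : 0 ≤ c := by
    by_contra hc
    push_neg at hc
    set t : ℝ := max 1 ((|a| + 2*|b| + 1)/(-c)) with ht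
    have ht1 : (1:ℝ) ≤ t := le_max_left _ _
    have ht0 : 0 < t := lt_of_lt_of_le one_pos ht1
    have ht2 : |a| + 2*|b| + 1 ≤ t * (-c) := by
      rw [← div_le_iff₀ (by linarith : (0:ℝ) < -c)]
      exact le_max_right _ _
    have h3 : t^2*c ≤ -(t*(|a| + 2*|b| + 1)) := by
      have := mul_le_mul_of_nonneg_left ht2 ht0.le
      nlinarith
    have := hR t
    nlinarith [le_abs_self a, le_abs_self b, neg_abs_le a, neg_abs_le b,
      mul_le_mul_of_nonneg_left (le_abs_self b) (by linarith : (0:ℝ) ≤ 2*t),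
      mul_le_mul_of_nonneg_left (neg_abs_le b) (by linarith : (0:ℝ) ≤ 2*t)]
  refine ⟨?_, hc⟩
  rcases eq_or_lt_of_le hc with hc0 | hcpos
  · have hb : b = 0 := by
      by_contra hb
      have hR' := hR (-(a+1)/(2*b))
      rw [← hc0] at hR'
      have key : a + 2 * (-(a+1)/(2*b)) * b + (-(a+1)/(2*b))^2 * 0 = -1 := by
        field_simp
        ring
      rw [key] at hR'
      norm_num at hR'
    rw [← hc0, hb]
    norm_num
  · have h0 := hR (-b/c)
    have he : a + 2*(-b/c)*b + (-b/c)^2*c = a - b^2/c := by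
      field_simp; ring
    rw [he] at h0
    rw [← sub_nonneg]
    have : 0 ≤ (a - b^2/c) * c := mul_nonneg h0 hcpos.le
    calc (0:ℝ) ≤ (a - b^2/c) * c := this
      _ = a*c - b^2 := by field_simp
lemma sign_aux {C C' G V Vy : ℝ} (hsign : C*C' ≤ 0) (hGC' : G*C' = G^2*V)
    (hV : 0 ≤ V) (hCS : C^2 ≤ Vy*V) : G*C ≤ 0 := by
  by_contra h
  push_neg at h
  have hG : G ≠ 0 := by rintro rfl; simp at h
  have hC : C ≠ 0 := by rintro rfl; simp at h
  have hVpos : 0 < V := by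
    rcases hV.lt_or_eq with h0 | h0
    · exact h0
    · exfalso
      have h2 : C^2 ≤ 0 := by rw [← h0] at hCS; simpa using hCS
      exact hC (pow_eq_zero_iff two_ne_zero |>.mp (le_antisymm h2 (sq_nonneg C)))
  have hC' : C' = G*V := by
    have : G * C' = G * (G*V) := by rw [hGC']; ring
    exact mul_left_cancel₀ hG this
  rw [hC'] at hsign
  nlinarith [mul_pos h hVpos]


lemma memℒp_two_condexp {α : Type*} {m m0 : MeasurableSpace α} {μ : Measure α}
    [IsFiniteMeasure μ] (hm : m ≤ m0) {f : α → ℝ} (hf : MemLp f 2 μ) :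
    MemLp (μ[f|m]) 2 μ := by
  have hfi : Integrable f μ := hf.integrable (by norm_num)
  set g : Lp ℝ 2 μ := (condExpL2 ℝ ℝ hm (hf.toLp f) : Lp ℝ 2 μ) with hg
  have hgm : AEStronglyMeasurable[m] (g : α → ℝ) μ := lpMeas.aestronglyMeasurable _
  have hae : (g : α → ℝ) =ᵐ[μ] μ[f|m] := by
    refine ae_eq_condExp_of_forall_setIntegral_eq hm hfi ?_ ?_ hgm
    · intro s _ _
      exact ((Lp.memLp g).integrable (by norm_num)).integrableOn
    · intro s hs hμs
      rw [show ∫ x in s, (g : α → ℝ) x ∂μ = ∫ x in s, f x ∂μ from ?_]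
      rw [integral_condExpL2_eq hm (hf.toLp f) hs hμs.ne]
      exact setIntegral_congr_ae (hm s hs) ((hf.coeFn_toLp).mono fun x hx _ => hx)
  exact (Lp.memLp g).ae_eq hae

theorem opposite_signs_implies_simple_better
    {Ω : Type*} {m0 : MeasurableSpace Ω} (μ : Measure Ω) [IsProbabilityMeasure μ]
    (mX mXZ : MeasurableSpace Ω) (h1 : mX ≤ mXZ) (h2 : mXZ ≤ m0)
    (Y Y' Z F G : Ω → ℝ) (hY : MemLp Y 2 μ) (hY' : MemLp Y' 2 μ)
    (hZ : MemLp Z 2 μ)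
    (hF : StronglyMeasurable[mX] F) (hG : StronglyMeasurable[mX] G)
    (hFint : Integrable F μ)
    (hFZint : Integrable (fun ω => F ω * Z ω) μ)
    (hGZint : Integrable (fun ω => G ω * Z ω) μ)
    (hGZ2int : Integrable (fun ω => G ω * Z ω ^ 2) μ)
    (hFYint : Integrable (fun ω => F ω * Y ω) μ)
    (hGZYint : Integrable (fun ω => G ω * Z ω * Y ω) μ)
    (hform : μ[Y'|mXZ] =ᵐ[μ] fun ω => F ω + G ω * Z ω)
    (hsign : ∀ᵐ ω ∂μ,
      ((μ[fun ω' => Y ω' * Z ω' | mX]) ω - (μ[Y|mX]) ω * (μ[Z|mX]) ω)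
        * ((μ[fun ω' => Y' ω' * Z ω' | mX]) ω - (μ[Y'|mX]) ω * (μ[Z|mX]) ω) ≤ 0) :
    (∀ᵐ ω ∂μ,
      (μ[fun ω' => (μ[Y'|mXZ]) ω' * Y ω' | mX]) ω
        - (μ[(μ[Y'|mXZ]) | mX]) ω * (μ[Y|mX]) ω ≤ 0) ∧
    ∫ ω, ((μ[Y'|mX]) ω - Y ω) ^ 2 ∂μ ≤ ∫ ω, ((μ[Y'|mXZ]) ω - Y ω) ^ 2 ∂μ := by
  have hmX : mX ≤ m0 := h1.trans h2
  -- abbreviations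
  set Yh := μ[Y'|mXZ] with hYh_def
  set EY := μ[Y|mX] with hEY_def
  set EZ := μ[Z|mX] with hEZ_def
  set EY' := μ[Y'|mX] with hEY'_def
  set EYZ := μ[fun ω' => Y ω' * Z ω'|mX] with hEYZ_def
  set EY'Z := μ[fun ω' => Y' ω' * Z ω'|mX] with hEY'Z_def
  set EZ2 := μ[fun ω => Z ω ^ 2|mX] with hEZ2_def
  -- basic integrability
  have hYi : Integrable Y μ := hY.integrable one_le_two
  have hY'i : Integrable Y' μ := hY'.integrable one_le_two
  have hZi : Integrable Z μ := hZ.integrable one_le_two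
  have hZ2i : Integrable (fun ω => Z ω ^ 2) μ := hZ.integrable_sq
  have hYZi : Integrable (fun ω => Y ω * Z ω) μ := integrable_mul₂ hY hZ
  have hZYi : Integrable (fun ω => Z ω * Y ω) μ := integrable_mul₂ hZ hY
  have hY'Zi : Integrable (fun ω => Y' ω * Z ω) μ := integrable_mul₂ hY' hZ
  -- condexps are in L2
  have hYh2 : MemLp Yh 2 μ := memℒp_two_condexp h2 hY'
  have hYx2 : MemLp EY' 2 μ := memℒp_two_condexp hmX hY'
  have hEYm : MemLp EY 2 μ := memℒp_two_condexp hmX hY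
  have hEZm : MemLp EZ 2 μ := memℒp_two_condexp hmX hZ
  have hEYsm : StronglyMeasurable[mX] EY := stronglyMeasurable_condExp
  have hEZsm : StronglyMeasurable[mX] EZ := stronglyMeasurable_condExp
  -- pull-out helper
  have pull : ∀ (φ W : Ω → ℝ), StronglyMeasurable[mX] φ →
      Integrable (fun ω => φ ω * W ω) μ → Integrable W μ →
      μ[fun ω => φ ω * W ω|mX] =ᵐ[μ] fun ω => φ ω * (μ[W|mX]) ω := by
    intro φ W hφ hint hW
    exact condExp_mul_of_stronglyMeasurable_left hφ hint hW
  -- Step (i) : EY' = F + G * EZ a.e.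
  have hEY'form : EY' =ᵐ[μ] fun ω => F ω + G ω * EZ ω := by
    have t1 : μ[Yh|mX] =ᵐ[μ] EY' := condExp_condExp_of_le h1 h2
    have t2 : μ[Yh|mX] =ᵐ[μ] μ[fun ω => F ω + G ω * Z ω|mX] := condExp_congr_ae hform
    have t3 : μ[fun ω => F ω + G ω * Z ω|mX]
        =ᵐ[μ] μ[F|mX] + μ[fun ω => G ω * Z ω|mX] := condExp_add hFint hGZint mX
    have t4 : μ[F|mX] = F := condExp_of_stronglyMeasurable hmX hF hFint
    have t5 : μ[fun ω => G ω * Z ω|mX] =ᵐ[μ] fun ω => G ω * EZ ω := pull G Z hG hGZint hZi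
    refine t1.symm.trans ((t2.trans t3).trans ?_)
    rw [t4]
    filter_upwards [t5] with ω h
    simp only [Pi.add_apply, h]
  -- centered variables
  set Y0 : Ω → ℝ := fun ω => Y ω - EY ω with hY0_def
  set Z0 : Ω → ℝ := fun ω => Z ω - EZ ω with hZ0_def
  have hY0m : MemLp Y0 2 μ := hY.sub hEYm
  have hZ0m : MemLp Z0 2 μ := hZ.sub hEZm
  set Vy := μ[fun ω => Y0 ω ^ 2|mX] with hVy_def
  set Vz := μ[fun ω => Z0 ω ^ 2|mX] with hVz_def
  set Cc := μ[fun ω => Y0 ω * Z0 ω|mX] with hCc_def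
  have iEZY : Integrable (fun ω => EZ ω * Y ω) μ := integrable_mul₂ hEZm hY
  have iEYZ : Integrable (fun ω => EY ω * Z ω) μ := integrable_mul₂ hEYm hZ
  have iEYEZ : Integrable (fun ω => EY ω * EZ ω) μ := integrable_mul₂ hEYm hEZm
  have iEZZ : Integrable (fun ω => (2 * EZ ω) * Z ω) μ := by
    have := integrable_mul₂ hEZm hZ
    simpa [mul_assoc] using this.const_mul 2
  have iEZEZ : Integrable (fun ω => EZ ω * EZ ω) μ := integrable_mul₂ hEZm hEZm
  -- Cc = C a.e.
  have hCcC : Cc =ᵐ[μ] fun ω => EYZ ω - EY ω * EZ ω := by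
    have ee : (fun ω => Y0 ω * Z0 ω)
        = fun ω => (Y ω * Z ω - EZ ω * Y ω) - (EY ω * Z ω - EY ω * EZ ω) := by
      funext ω
      simp only [hY0_def, hZ0_def]
      ring
    have e0 : Cc = μ[fun ω => (Y ω * Z ω - EZ ω * Y ω) - (EY ω * Z ω - EY ω * EZ ω)|mX] := by
      rw [hCc_def, ee]
    have d1 : μ[fun ω => (Y ω * Z ω - EZ ω * Y ω) - (EY ω * Z ω - EY ω * EZ ω)|mX]
        =ᵐ[μ] μ[fun ω => Y ω * Z ω - EZ ω * Y ω|mX]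
          - μ[fun ω => EY ω * Z ω - EY ω * EZ ω|mX] :=
      condExp_sub (hYZi.sub iEZY) (iEYZ.sub iEYEZ) mX
    have d2 : μ[fun ω => Y ω * Z ω - EZ ω * Y ω|mX]
        =ᵐ[μ] EYZ - μ[fun ω => EZ ω * Y ω|mX] := condExp_sub hYZi iEZY mX
    have d3 : μ[fun ω => EY ω * Z ω - EY ω * EZ ω|mX]
        =ᵐ[μ] μ[fun ω => EY ω * Z ω|mX] - μ[fun ω => EY ω * EZ ω|mX] :=
      condExp_sub iEYZ iEYEZ mX
    have p1 : μ[fun ω => EZ ω * Y ω|mX] =ᵐ[μ] fun ω => EZ ω * EY ω := pull EZ Y hEZsm iEZY hYi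
    have p2 : μ[fun ω => EY ω * Z ω|mX] =ᵐ[μ] fun ω => EY ω * EZ ω := pull EY Z hEYsm iEYZ hZi
    have p3 : μ[fun ω => EY ω * EZ ω|mX] = fun ω => EY ω * EZ ω :=
      condExp_of_stronglyMeasurable hmX (hEYsm.mul hEZsm) iEYEZ
    rw [e0]
    filter_upwards [d1, d2, d3, p1, p2] with ω k1 k2 k3 k4 k5
    have k6 : (μ[fun ω => EY ω * EZ ω|mX]) ω = EY ω * EZ ω := by rw [p3]
    simp only [Pi.sub_apply] at k1 k2 k3
    rw [k1, k2, k3, k4, k5, k6]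
    ring
  -- Vz = V a.e.
  have hVzV : Vz =ᵐ[μ] fun ω => EZ2 ω - EZ ω ^ 2 := by
    have ee : (fun ω => Z0 ω ^ 2)
        = fun ω => (Z ω ^ 2 - (2 * EZ ω) * Z ω) + EZ ω * EZ ω := by
      funext ω
      simp only [hZ0_def]
      ring
    have e0 : Vz = μ[fun ω => (Z ω ^ 2 - (2 * EZ ω) * Z ω) + EZ ω * EZ ω|mX] := by
      rw [hVz_def, ee]
    have d1 : μ[fun ω => (Z ω ^ 2 - (2 * EZ ω) * Z ω) + EZ ω * EZ ω|mX]
        =ᵐ[μ] μ[fun ω => Z ω ^ 2 - (2 * EZ ω) * Z ω|mX] + μ[fun ω => EZ ω * EZ ω|mX] :=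
      condExp_add (hZ2i.sub iEZZ) iEZEZ mX
    have d2 : μ[fun ω => Z ω ^ 2 - (2 * EZ ω) * Z ω|mX]
        =ᵐ[μ] EZ2 - μ[fun ω => (2 * EZ ω) * Z ω|mX] := condExp_sub hZ2i iEZZ mX
    have p1 : μ[fun ω => (2 * EZ ω) * Z ω|mX] =ᵐ[μ] fun ω => (2 * EZ ω) * EZ ω :=
      pull (fun ω => 2 * EZ ω) Z (hEZsm.const_mul 2) iEZZ hZi
    have p2 : μ[fun ω => EZ ω * EZ ω|mX] = fun ω => EZ ω * EZ ω :=
      condExp_of_stronglyMeasurable hmX (hEZsm.mul hEZsm) iEZEZ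
    rw [e0]
    filter_upwards [d1, d2, p1] with ω k1 k2 k3
    have k4 : (μ[fun ω => EZ ω * EZ ω|mX]) ω = EZ ω * EZ ω := by rw [p2]
    simp only [Pi.add_apply, Pi.sub_apply] at k1 k2
    rw [k1, k2, k3, k4]
    ring
  have hVz0 : 0 ≤ᵐ[μ] Vz := condExp_nonneg (ae_of_all _ fun ω => sq_nonneg _)
  -- quadratic expansion for each rational
  have hquad : ∀ q : ℚ, ∀ᵐ ω ∂μ,
      0 ≤ Vy ω + 2 * (q:ℝ) * Cc ω + (q:ℝ)^2 * Vz ω := by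
    intro q
    have iY02 : Integrable (fun ω => Y0 ω ^ 2) μ := hY0m.integrable_sq
    have iY0Z0 : Integrable (fun ω => Y0 ω * Z0 ω) μ := integrable_mul₂ hY0m hZ0m
    have iZ02 : Integrable (fun ω => Z0 ω ^ 2) μ := hZ0m.integrable_sq
    have hnn : 0 ≤ᵐ[μ] μ[fun ω => (Y0 ω + (q:ℝ) * Z0 ω)^2|mX] :=
      condExp_nonneg (ae_of_all _ fun ω => sq_nonneg _)
    have ee : (fun ω => (Y0 ω + (q:ℝ) * Z0 ω)^2)
        = fun ω => (Y0 ω ^ 2 + (2*(q:ℝ)) * (Y0 ω * Z0 ω)) + (q:ℝ)^2 * Z0 ω ^ 2 := by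
      funext ω
      ring
    have e0 : μ[fun ω => (Y0 ω + (q:ℝ) * Z0 ω)^2|mX]
        = μ[fun ω => (Y0 ω ^ 2 + (2*(q:ℝ)) * (Y0 ω * Z0 ω)) + (q:ℝ)^2 * Z0 ω ^ 2|mX] := by
      rw [ee]
    have d1 : μ[fun ω => (Y0 ω ^ 2 + (2*(q:ℝ)) * (Y0 ω * Z0 ω)) + (q:ℝ)^2 * Z0 ω ^ 2|mX]
        =ᵐ[μ] μ[fun ω => Y0 ω ^ 2 + (2*(q:ℝ)) * (Y0 ω * Z0 ω)|mX]
          + μ[fun ω => (q:ℝ)^2 * Z0 ω ^ 2|mX] :=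
      condExp_add (iY02.add (iY0Z0.const_mul _)) (iZ02.const_mul _) mX
    have d2 : μ[fun ω => Y0 ω ^ 2 + (2*(q:ℝ)) * (Y0 ω * Z0 ω)|mX]
        =ᵐ[μ] Vy + μ[fun ω => (2*(q:ℝ)) * (Y0 ω * Z0 ω)|mX] :=
      condExp_add iY02 (iY0Z0.const_mul _) mX
    have s1 : μ[fun ω => (2*(q:ℝ)) * (Y0 ω * Z0 ω)|mX]
        =ᵐ[μ] fun ω => (2*(q:ℝ)) * Cc ω := condExp_smul (2*(q:ℝ)) (fun ω => Y0 ω * Z0 ω) mX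
    have s2 : μ[fun ω => (q:ℝ)^2 * Z0 ω ^ 2|mX]
        =ᵐ[μ] fun ω => (q:ℝ)^2 * Vz ω := condExp_smul ((q:ℝ)^2) (fun ω => Z0 ω ^ 2) mX
    rw [e0] at hnn
    filter_upwards [hnn, d1, d2, s1, s2] with ω k0 k1 k2 k3 k4
    simp only [Pi.add_apply] at k1 k2
    simp only [k1, k2, k3, k4, Pi.zero_apply] at k0
    linarith
  -- conditional Cauchy-Schwarz and nonnegativity of conditional variance
  have hCS : ∀ᵐ ω ∂μ, (EYZ ω - EY ω * EZ ω)^2 ≤ Vy ω * (EZ2 ω - EZ ω ^ 2) := by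
    have hq := ae_all_iff.mpr hquad
    filter_upwards [hq, hCcC, hVzV] with ω hqω hCω hVω
    have h := (cs_of_forall_rat (fun q => hqω q)).1
    rw [hCω, hVω] at h
    exact h
  have hV0 : ∀ᵐ ω ∂μ, 0 ≤ EZ2 ω - EZ ω ^ 2 := by
    filter_upwards [hVz0, hVzV] with ω k1 k2
    rw [← k2]
    exact k1
  -- Step (ii): G * C' = G^2 * V a.e., via truncation
  have hGkey : ∀ n : ℕ, ∀ᵐ ω ∂μ, |G ω| ≤ (n:ℝ) →
      G ω * (EY'Z ω - EY' ω * EZ ω) = G ω ^ 2 * (EZ2 ω - EZ ω ^ 2) := by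
    intro n
    set A : Set Ω := {ω | |G ω| ≤ (n:ℝ)} with hA_def
    have hA : MeasurableSet[mX] A := hG.norm.measurableSet_le stronglyMeasurable_const
    have hGbd : ∀ ω, |A.indicator G ω| ≤ (n:ℝ) := by
      intro ω
      by_cases h : ω ∈ A
      · rw [Set.indicator_of_mem h]; exact h
      · rw [Set.indicator_of_notMem h]; simpa using (n.cast_nonneg : (0:ℝ) ≤ n)
    set K : Ω → ℝ := A.indicator (fun ω => Yh ω - F ω) with hK_def
    have hKsm : StronglyMeasurable[mXZ] K :=
      (stronglyMeasurable_condExp.sub (hF.mono h1)).indicator (h1 _ hA)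
    have hKae : K =ᵐ[μ] fun ω => A.indicator G ω * Z ω := by
      filter_upwards [hform] with ω hω
      by_cases h : ω ∈ A
      · simp only [hK_def, Set.indicator_of_mem h, hω]; ring
      · simp [hK_def, Set.indicator_of_notMem h]
    have hK2 : MemLp K 2 μ := by
      refine MemLp.of_le_mul (c := (n:ℝ)) hZ ((hKsm.mono h2).aestronglyMeasurable) ?_
      filter_upwards [hKae] with ω hω
      rw [hω]
      calc ‖A.indicator G ω * Z ω‖ = |A.indicator G ω| * ‖Z ω‖ := by
            rw [norm_mul]; rfl
        _ ≤ (n:ℝ) * ‖Z ω‖ := mul_le_mul_of_nonneg_right (hGbd ω) (norm_nonneg _)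
    have iIndY'Z : Integrable (fun ω => A.indicator G ω * (Y' ω * Z ω)) μ :=
      hY'Zi.bdd_mul (((hG.indicator hA).mono hmX).aestronglyMeasurable)
        (ae_of_all _ fun ω => by simpa using hGbd ω)
    have c1 : μ[fun ω => A.indicator G ω * (Y' ω * Z ω)|mX]
        =ᵐ[μ] fun ω => A.indicator G ω * EY'Z ω := by
      have h := pull (A.indicator G) (fun ω => Y' ω * Z ω) (hG.indicator hA) iIndY'Z hY'Zi
      exact h
    have iKY' : Integrable (fun ω => K ω * Y' ω) μ := integrable_mul₂ hK2 hY'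
    have c0 : μ[fun ω => A.indicator G ω * (Y' ω * Z ω)|mX]
        =ᵐ[μ] μ[fun ω => K ω * Y' ω|mX] := by
      refine condExp_congr_ae ?_
      filter_upwards [hKae] with ω h
      rw [h]; ring
    have c2 : μ[fun ω => K ω * Y' ω|mXZ] =ᵐ[μ] fun ω => K ω * Yh ω :=
      condExp_mul_of_stronglyMeasurable_left hKsm iKY' hY'i
    have c3 : μ[fun ω => K ω * Y' ω|mX] =ᵐ[μ] μ[fun ω => K ω * Yh ω|mX] :=
      (condExp_condExp_of_le h1 h2).symm.trans (condExp_congr_ae c2)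
    have e1 : (fun ω => K ω * Yh ω) =ᵐ[μ]
        fun ω => A.indicator (fun ω => F ω * G ω) ω * Z ω
          + A.indicator (fun ω => G ω * G ω) ω * Z ω ^ 2 := by
      filter_upwards [hform] with ω hω
      by_cases h : ω ∈ A
      · simp only [hK_def, Set.indicator_of_mem h, hω]; ring
      · simp [hK_def, Set.indicator_of_notMem h]
    have hFGbd : ∀ ω, ‖A.indicator (fun ω => F ω * G ω) ω * Z ω‖ ≤ (n:ℝ) * ‖F ω * Z ω‖ := by
      intro ω
      by_cases h : ω ∈ A
      · rw [Set.indicator_of_mem h]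
        have : |F ω * G ω * Z ω| = |G ω| * |F ω * Z ω| := by
          rw [← abs_mul]; congr 1; ring
        rw [Real.norm_eq_abs, Real.norm_eq_abs, this]
        exact mul_le_mul_of_nonneg_right h (abs_nonneg _)
      · rw [Set.indicator_of_notMem h]
        simp only [zero_mul, norm_zero]
        positivity
    have hGGbd : ∀ ω, ‖A.indicator (fun ω => G ω * G ω) ω * Z ω ^ 2‖
        ≤ (n:ℝ) * ‖G ω * Z ω ^ 2‖ := by
      intro ω
      by_cases h : ω ∈ A
      · rw [Set.indicator_of_mem h]
        have : |G ω * G ω * Z ω ^ 2| = |G ω| * |G ω * Z ω ^ 2| := by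
          rw [← abs_mul]; congr 1; ring
        rw [Real.norm_eq_abs, Real.norm_eq_abs, this]
        exact mul_le_mul_of_nonneg_right h (abs_nonneg _)
      · rw [Set.indicator_of_notMem h]
        simp only [zero_mul, norm_zero]
        positivity
    have iP1 : Integrable (fun ω => A.indicator (fun ω => F ω * G ω) ω * Z ω) μ := by
      refine (hFZint.norm.const_mul (n:ℝ)).mono' ?_ (ae_of_all _ hFGbd)
      exact ((((hF.mul hG).indicator hA).mono hmX).aestronglyMeasurable).mul
        hZ.aestronglyMeasurable
    have iP2 : Integrable (fun ω => A.indicator (fun ω => G ω * G ω) ω * Z ω ^ 2) μ := by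
      refine (hGZ2int.norm.const_mul (n:ℝ)).mono' ?_ (ae_of_all _ hGGbd)
      exact ((((hG.mul hG).indicator hA).mono hmX).aestronglyMeasurable).mul
        (hZ.aestronglyMeasurable.pow 2)
    have c4 : μ[fun ω => K ω * Yh ω|mX]
        =ᵐ[μ] μ[fun ω => A.indicator (fun ω => F ω * G ω) ω * Z ω|mX]
          + μ[fun ω => A.indicator (fun ω => G ω * G ω) ω * Z ω ^ 2|mX] :=
      (condExp_congr_ae e1).trans (condExp_add iP1 iP2 mX)
    have c5 : μ[fun ω => A.indicator (fun ω => F ω * G ω) ω * Z ω|mX]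
        =ᵐ[μ] fun ω => A.indicator (fun ω => F ω * G ω) ω * EZ ω :=
      pull _ Z ((hF.mul hG).indicator hA) iP1 hZi
    have c6 : μ[fun ω => A.indicator (fun ω => G ω * G ω) ω * Z ω ^ 2|mX]
        =ᵐ[μ] fun ω => A.indicator (fun ω => G ω * G ω) ω * EZ2 ω :=
      pull _ (fun ω => Z ω ^ 2) ((hG.mul hG).indicator hA) iP2 hZ2i
    filter_upwards [c0, c1, c3, c4, c5, c6, hEY'form] with ω k0 k1 k3 k4 k5 k6 kf
    intro hGn
    have hmem : ω ∈ A := hGn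
    simp only [Pi.add_apply] at k4
    have k1' : (μ[fun ω => A.indicator G ω * (Y' ω * Z ω)|mX]) ω
        = A.indicator G ω * EY'Z ω := k1
    have k5' : (μ[fun ω => A.indicator (fun ω => F ω * G ω) ω * Z ω|mX]) ω
        = A.indicator (fun ω => F ω * G ω) ω * EZ ω := k5
    have k6' : (μ[fun ω => A.indicator (fun ω => G ω * G ω) ω * Z ω ^ 2|mX]) ω
        = A.indicator (fun ω => G ω * G ω) ω * EZ2 ω := k6
    have kf' : EY' ω = F ω + G ω * EZ ω := kf
    have key : G ω * EY'Z ω = F ω * G ω * EZ ω + G ω * G ω * EZ2 ω := by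
      have t : A.indicator G ω * EY'Z ω
          = A.indicator (fun ω => F ω * G ω) ω * EZ ω
            + A.indicator (fun ω => G ω * G ω) ω * EZ2 ω := by
        rw [← k1', k0, k3, k4, k5', k6']
      rwa [Set.indicator_of_mem hmem, Set.indicator_of_mem hmem,
        Set.indicator_of_mem hmem] at t
    rw [kf']
    linear_combination key
  have hGC' : ∀ᵐ ω ∂μ, G ω * (EY'Z ω - EY' ω * EZ ω) = G ω ^ 2 * (EZ2 ω - EZ ω ^ 2) := by
    have h := ae_all_iff.mpr hGkey
    filter_upwards [h] with ω hω
    obtain ⟨n, hn⟩ := exists_nat_ge |G ω|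
    exact hω n hn
  -- conclusion 1
  have hGZY' : Integrable (fun ω => G ω * (Z ω * Y ω)) μ := by
    have : (fun ω => G ω * (Z ω * Y ω)) = fun ω => G ω * Z ω * Y ω := by
      funext ω; ring
    rw [this]; exact hGZYint
  have m1 : μ[fun ω' => Yh ω' * Y ω'|mX] =ᵐ[μ] fun ω => F ω * EY ω + G ω * EYZ ω := by
    have e : (fun ω => Yh ω * Y ω) =ᵐ[μ] fun ω => F ω * Y ω + G ω * (Z ω * Y ω) := by
      filter_upwards [hform] with ω h
      rw [h]; ring
    have d1 : μ[fun ω => Yh ω * Y ω|mX]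
        =ᵐ[μ] μ[fun ω => F ω * Y ω|mX] + μ[fun ω => G ω * (Z ω * Y ω)|mX] :=
      (condExp_congr_ae e).trans (condExp_add hFYint hGZY' mX)
    have p1 : μ[fun ω => F ω * Y ω|mX] =ᵐ[μ] fun ω => F ω * EY ω := pull F Y hF hFYint hYi
    have p2 : μ[fun ω => G ω * (Z ω * Y ω)|mX]
        =ᵐ[μ] fun ω => G ω * (μ[fun ω => Z ω * Y ω|mX]) ω := pull G _ hG hGZY' hZYi
    have eflip : (fun ω => Z ω * Y ω) = (fun ω' => Y ω' * Z ω') := by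
      funext ω
      ring
    have eZY : μ[fun ω => Z ω * Y ω|mX] = EYZ := by
      rw [hEYZ_def, eflip]
    filter_upwards [d1, p1, p2] with ω k1 k2 k3
    simp only [Pi.add_apply] at k1
    simp only [k1, k2, k3, eZY]
  have m2 : μ[Yh|mX] =ᵐ[μ] fun ω => F ω + G ω * EZ ω :=
    (condExp_condExp_of_le h1 h2).trans hEY'form
  have concl1 : ∀ᵐ ω ∂μ,
      (μ[fun ω' => Yh ω' * Y ω'|mX]) ω - (μ[Yh|mX]) ω * EY ω ≤ 0 := by
    filter_upwards [m1, m2, hsign, hGC', hCS, hV0] with ω k1 k2 ks kg kcs kv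
    simp only [k1, k2]
    have h := sign_aux ks kg kv kcs
    nlinarith [h]
  refine ⟨concl1, ?_⟩
  -- Part 2
  have hYhY_int : Integrable (fun ω => Yh ω * Y ω) μ := integrable_mul₂ hYh2 hY
  have hYxY_int : Integrable (fun ω => EY' ω * Y ω) μ := integrable_mul₂ hYx2 hY
  have hYhYx_int : Integrable (fun ω => Yh ω * EY' ω) μ := integrable_mul₂ hYh2 hYx2
  have hYxYx_int : Integrable (fun ω => EY' ω * EY' ω) μ := integrable_mul₂ hYx2 hYx2
  have hD2 : MemLp (fun ω => Yh ω - EY' ω) 2 μ := hYh2.sub hYx2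
  have tow : μ[Yh|mX] =ᵐ[μ] EY' := condExp_condExp_of_le h1 h2
  -- (†)
  have int_le : ∫ ω, Yh ω * Y ω ∂μ ≤ ∫ ω, EY' ω * Y ω ∂μ := by
    have p : μ[fun ω => EY' ω * Y ω|mX] =ᵐ[μ] fun ω => EY' ω * EY ω :=
      pull EY' Y stronglyMeasurable_condExp hYxY_int hYi
    have mono : μ[fun ω' => Yh ω' * Y ω'|mX] ≤ᵐ[μ] fun ω => EY' ω * EY ω := by
      filter_upwards [concl1, tow] with ω hc ht
      rw [← ht]
      nlinarith [hc]
    calc ∫ ω, Yh ω * Y ω ∂μ = ∫ ω, (μ[fun ω' => Yh ω' * Y ω'|mX]) ω ∂μ :=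
          (integral_condExp hmX).symm
      _ ≤ ∫ ω, EY' ω * EY ω ∂μ :=
          integral_mono_ae integrable_condExp (integrable_mul₂ hYx2 hEYm) mono
      _ = ∫ ω, (μ[fun ω => EY' ω * Y ω|mX]) ω ∂μ := (integral_congr_ae p).symm
      _ = ∫ ω, EY' ω * Y ω ∂μ := integral_condExp hmX
  -- (‡)
  have int_eq : ∫ ω, Yh ω * EY' ω ∂μ = ∫ ω, EY' ω * EY' ω ∂μ := by
    have p : μ[fun ω => EY' ω * Yh ω|mX] =ᵐ[μ] fun ω => EY' ω * (μ[Yh|mX]) ω :=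
      pull EY' Yh stronglyMeasurable_condExp
        (by simpa [mul_comm] using hYhYx_int) (hYh2.integrable one_le_two)
    calc ∫ ω, Yh ω * EY' ω ∂μ = ∫ ω, EY' ω * Yh ω ∂μ :=
          integral_congr_ae (ae_of_all _ fun ω => mul_comm _ _)
      _ = ∫ ω, (μ[fun ω => EY' ω * Yh ω|mX]) ω ∂μ := (integral_condExp hmX).symm
      _ = ∫ ω, EY' ω * (μ[Yh|mX]) ω ∂μ := integral_congr_ae p
      _ = ∫ ω, EY' ω * EY' ω ∂μ := by
          refine integral_congr_ae ?_
          filter_upwards [tow] with ω h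
          rw [h]
  -- expansion
  have i1 : Integrable (fun ω => (Yh ω - EY' ω)^2) μ := hD2.integrable_sq
  have i2 : Integrable (fun ω => (Yh ω - EY' ω) * EY' ω) μ := integrable_mul₂ hD2 hYx2
  have i3 : Integrable (fun ω => (Yh ω - EY' ω) * Y ω) μ := integrable_mul₂ hD2 hY
  have i4 : Integrable (fun ω => (EY' ω - Y ω)^2) μ := (hYx2.sub hY).integrable_sq
  have expand : ∫ ω, (Yh ω - Y ω)^2 ∂μ
      = ((∫ ω, (Yh ω - EY' ω)^2 ∂μ) + 2*(∫ ω, (Yh ω - EY' ω) * EY' ω ∂μ)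
        - 2*(∫ ω, (Yh ω - EY' ω) * Y ω ∂μ)) + ∫ ω, (EY' ω - Y ω)^2 ∂μ := by
    have e : (fun ω => (Yh ω - Y ω)^2)
        = fun ω => (((Yh ω - EY' ω)^2 + 2*((Yh ω - EY' ω) * EY' ω))
          - 2*((Yh ω - EY' ω) * Y ω)) + (EY' ω - Y ω)^2 := by
      funext ω; ring
    rw [show ∫ ω, (Yh ω - Y ω)^2 ∂μ
        = ∫ ω, ((((Yh ω - EY' ω)^2 + 2*((Yh ω - EY' ω) * EY' ω))
          - 2*((Yh ω - EY' ω) * Y ω)) + (EY' ω - Y ω)^2) ∂μ from by rw [← e]]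
    have i2' : Integrable (fun ω => 2*((Yh ω - EY' ω) * EY' ω)) μ := i2.const_mul 2
    have i3' : Integrable (fun ω => 2*((Yh ω - EY' ω) * Y ω)) μ := i3.const_mul 2
    have i12 : Integrable (fun ω => (Yh ω - EY' ω)^2 + 2*((Yh ω - EY' ω) * EY' ω)) μ :=
      i1.add i2'
    have i123 : Integrable (fun ω =>
        ((Yh ω - EY' ω)^2 + 2*((Yh ω - EY' ω) * EY' ω)) - 2*((Yh ω - EY' ω) * Y ω)) μ :=
      i12.sub i3'
    rw [integral_add i123 i4, integral_sub i12 i3', integral_add i1 i2',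
      integral_const_mul, integral_const_mul]
  have term2 : ∫ ω, (Yh ω - EY' ω) * EY' ω ∂μ = 0 := by
    have e : (fun ω => (Yh ω - EY' ω) * EY' ω)
        = fun ω => Yh ω * EY' ω - EY' ω * EY' ω := by funext ω; ring
    rw [show ∫ ω, (Yh ω - EY' ω) * EY' ω ∂μ
        = ∫ ω, (Yh ω * EY' ω - EY' ω * EY' ω) ∂μ from by rw [← e]]
    rw [integral_sub hYhYx_int hYxYx_int, int_eq, sub_self]
  have term3 : ∫ ω, (Yh ω - EY' ω) * Y ω ∂μ ≤ 0 := by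
    have e : (fun ω => (Yh ω - EY' ω) * Y ω)
        = fun ω => Yh ω * Y ω - EY' ω * Y ω := by funext ω; ring
    rw [show ∫ ω, (Yh ω - EY' ω) * Y ω ∂μ
        = ∫ ω, (Yh ω * Y ω - EY' ω * Y ω) ∂μ from by rw [← e]]
    rw [integral_sub hYhY_int hYxY_int]
    linarith [int_le]
  have term1 : 0 ≤ ∫ ω, (Yh ω - EY' ω)^2 ∂μ := integral_nonneg fun ω => sq_nonneg _
  linarith [expand, term1, term2, term3]
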